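/- Suppose the market weight sequence {μ(t)} ⊂ Δ_n satisfies Assumption (M), Θ ⊂ L^∞(Δ_n, Δ̄_n) is totally bounded in the supremum metric, and the asymptotic growth rate W(π) = lim_{t→∞} (1/t) log V_π(t) exists for every π ∈ Θ. Then the convergence is uniform over Θ: lim_{t→∞} sup_{π ∈ Θ} | (1/t) log V_π(t) − W(π) | = 0. -/
import Mathlib


open MeasureTheory Filter Topology Finset
open scoped UniformConvergence ENNReal

noncomputable section

/-- The open unit simplex in `ℝⁿ`. -/
def oS (n : ℕ) : Set (Fin n → ℝ) := {p | (∀ i, 0 < p i) ∧ ∑ i, p i = 1}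

/-- The closed unit simplex in `ℝⁿ`. -/
def cS (n : ℕ) : Set (Fin n → ℝ) := {p | (∀ i, 0 ≤ p i) ∧ ∑ i, p i = 1}

/-- Relative value of a (time-dependent) weight sequence `w` along market path `μ`. -/
def relV {n : ℕ} (μ w : ℕ → Fin n → ℝ) : ℕ → ℝ
  | 0 => 1
  | t + 1 => relV μ w t * ∑ i, w t i * (μ (t + 1) i / μ t i)

/-- Relative value of a portfolio map. -/
def pV {n : ℕ} (μ : ℕ → ↥(oS n)) (π : ↥(oS n) → ↥(cS n)) : ℕ → ℝ :=
  relV (fun t => (μ t : Fin n → ℝ)) (fun t => (π (μ t) : Fin n → ℝ))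

/-- Assumption (M): relative returns bounded between `1/M` and `M`. -/
def AssumptionM {n : ℕ} (M : ℝ) (μ : ℕ → ↥(oS n)) : Prop :=
  ∀ t i, 1 / M ≤ (μ (t + 1) : Fin n → ℝ) i / (μ t : Fin n → ℝ) i ∧
    (μ (t + 1) : Fin n → ℝ) i / (μ t : Fin n → ℝ) i ≤ M

/-- Normalized wealth distribution `ν_t(B) = (∫_B V dν₀)/(∫ V dν₀)`. -/
def wd {T : Type*} [MeasurableSpace T] (ν0 : Measure T) (V : T → ℝ) : Measure T :=
  (ν0.withDensity (fun x => ENNReal.ofReal (V x)) Set.univ)⁻¹ •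
    ν0.withDensity fun x => ENNReal.ofReal (V x)

/-- Portfolio maps `Δₙ → Δ̄ₙ` with the topology (uniformity) of uniform convergence,
i.e. of the supremum metric. -/
abbrev PMap (n : ℕ) := ↥(oS n) →ᵤ ↥(cS n)

instance {n : ℕ} : MeasurableSpace (PMap n) := borel _

lemma abs_log_sub_log_le' {a b c : ℝ} (hc : 0 < c) (ha : c ≤ a) (hb : c ≤ b) :
    |Real.log a - Real.log b| ≤ |a - b| / c := by
  have key : ∀ x y : ℝ, c ≤ x → c ≤ y → Real.log x - Real.log y ≤ |x - y| / c := by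
    intro x y hx hy
    have hx0 : 0 < x := lt_of_lt_of_le hc hx
    have hy0 : 0 < y := lt_of_lt_of_le hc hy
    rw [← Real.log_div hx0.ne' hy0.ne']
    have h2 : Real.log (x / y) ≤ x / y - 1 := Real.log_le_sub_one_of_pos (by positivity)
    have h3 : x / y - 1 = (x - y) / y := by field_simp
    have h4 : (x - y) / y ≤ |x - y| / y := by
      gcongr
      exact le_abs_self _
    have h5 : |x - y| / y ≤ |x - y| / c := by
      apply div_le_div_of_nonneg_left (abs_nonneg _) hc hy
    linarith
  rw [abs_sub_le_iff]
  exact ⟨key a b ha hb, by rw [abs_sub_comm]; exact key b a hb ha⟩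

lemma pV_succ' {n : ℕ} (μ : ℕ → ↥(oS n)) (π : ↥(oS n) → ↥(cS n)) (t : ℕ) :
    pV μ π (t + 1) = pV μ π t *
      ∑ i, (π (μ t) : Fin n → ℝ) i * ((μ (t + 1) : Fin n → ℝ) i / (μ t : Fin n → ℝ) i) := rfl


/-- Lemma 3.6: uniform convergence of growth rates over a totally
bounded family of portfolio maps. -/
theorem stmt10 {n : ℕ} (hn : 2 ≤ n) (M : ℝ) (hM : 0 < M)
    (μ : ℕ → ↥(oS n)) (hAM : AssumptionM M μ)
    (Θ : Set (PMap n)) (hTB : TotallyBounded Θ)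
    (W : ↥Θ → ℝ)
    (hW : ∀ θ : ↥Θ, Tendsto (fun t : ℕ => Real.log (pV μ (UniformFun.toFun θ.1) t) / t)
      atTop (𝓝 (W θ))) :
    Tendsto (fun t : ℕ => ⨆ θ : ↥Θ, |Real.log (pV μ (UniformFun.toFun θ.1) t) / t - W θ|)
      atTop (𝓝 0) := by
  classical
  set r : ℕ → Fin n → ℝ :=
    fun t i => (μ (t + 1) : Fin n → ℝ) i / (μ t : Fin n → ℝ) i with hr_def
  have hr : ∀ t i, 1 / M ≤ r t i ∧ r t i ≤ M := hAM
  have hMinv : (0 : ℝ) < 1 / M := by positivity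
  -- bounds on the one-step returns of any portfolio
  have hstep : ∀ (π : ↥(oS n) → ↥(cS n)) (t : ℕ),
      1 / M ≤ (∑ i, (π (μ t) : Fin n → ℝ) i * r t i) ∧
      (∑ i, (π (μ t) : Fin n → ℝ) i * r t i) ≤ M := by
    intro π t
    obtain ⟨hpos, hsum⟩ := (π (μ t)).2
    constructor
    · calc 1 / M = ∑ i, (π (μ t) : Fin n → ℝ) i * (1 / M) := by
            rw [← Finset.sum_mul, hsum, one_mul]
        _ ≤ _ := Finset.sum_le_sum fun i _ => mul_le_mul_of_nonneg_left (hr t i).1 (hpos i)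
    · calc (∑ i, (π (μ t) : Fin n → ℝ) i * r t i)
          ≤ ∑ i, (π (μ t) : Fin n → ℝ) i * M :=
            Finset.sum_le_sum fun i _ => mul_le_mul_of_nonneg_left (hr t i).2 (hpos i)
        _ = M := by rw [← Finset.sum_mul, hsum, one_mul]
  have hpVb : ∀ (π : ↥(oS n) → ↥(cS n)) (t : ℕ),
      (1 / M) ^ t ≤ pV μ π t ∧ pV μ π t ≤ M ^ t := by
    intro π t
    induction t with
    | zero => simp [pV, relV]
    | succ t ih =>
      rw [pV_succ']
      constructor
      · rw [pow_succ]
        exact mul_le_mul ih.1 (hstep π t).1 hMinv.le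
          (le_trans (pow_nonneg hMinv.le t) ih.1)
      · rw [pow_succ]
        exact mul_le_mul ih.2 (hstep π t).2 (le_trans hMinv.le (hstep π t).1)
          (pow_nonneg hM.le t)
  have hpVpos : ∀ (π : ↥(oS n) → ↥(cS n)) (t : ℕ), 0 < pV μ π t := fun π t =>
    lt_of_lt_of_le (pow_pos hMinv t) (hpVb π t).1
  set K : ℝ := (n : ℝ) * M ^ 2 with hK_def
  have hK0 : 0 ≤ K := by positivity
  -- Lipschitz estimate on log of relative values
  have hdiff : ∀ (π π' : ↥(oS n) → ↥(cS n)) (δ : ℝ), 0 ≤ δ →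
      (∀ x i, |(π x : Fin n → ℝ) i - (π' x : Fin n → ℝ) i| ≤ δ) →
      ∀ t : ℕ, |Real.log (pV μ π t) - Real.log (pV μ π' t)| ≤ t * (K * δ) := by
    intro π π' δ hδ hd t
    induction t with
    | zero => simp [pV, relV]
    | succ t ih =>
      have hs := hstep π t
      have hs' := hstep π' t
      have h1 : Real.log (pV μ π (t + 1)) = Real.log (pV μ π t) +
          Real.log (∑ i, (π (μ t) : Fin n → ℝ) i * r t i) := by
        rw [pV_succ', Real.log_mul (hpVpos π t).ne' (lt_of_lt_of_le hMinv hs.1).ne']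
      have h1' : Real.log (pV μ π' (t + 1)) = Real.log (pV μ π' t) +
          Real.log (∑ i, (π' (μ t) : Fin n → ℝ) i * r t i) := by
        rw [pV_succ', Real.log_mul (hpVpos π' t).ne' (lt_of_lt_of_le hMinv hs'.1).ne']
      have hsd : |(∑ i, (π (μ t) : Fin n → ℝ) i * r t i) -
          (∑ i, (π' (μ t) : Fin n → ℝ) i * r t i)| ≤ (n : ℝ) * (δ * M) := by
        rw [← Finset.sum_sub_distrib]
        calc |∑ i, ((π (μ t) : Fin n → ℝ) i * r t i - (π' (μ t) : Fin n → ℝ) i * r t i)|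
            ≤ ∑ i, |(π (μ t) : Fin n → ℝ) i * r t i - (π' (μ t) : Fin n → ℝ) i * r t i| :=
              Finset.abs_sum_le_sum_abs _ _
          _ ≤ ∑ _i : Fin n, δ * M := by
              apply Finset.sum_le_sum
              intro i _
              rw [← sub_mul, abs_mul]
              refine mul_le_mul (hd (μ t) i) ?_ (abs_nonneg _) hδ
              rw [abs_of_nonneg (le_trans hMinv.le (hr t i).1)]
              exact (hr t i).2
          _ = (n : ℝ) * (δ * M) := by
              rw [Finset.sum_const, Finset.card_univ, Fintype.card_fin, nsmul_eq_mul]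
      have hls : |Real.log (∑ i, (π (μ t) : Fin n → ℝ) i * r t i) -
          Real.log (∑ i, (π' (μ t) : Fin n → ℝ) i * r t i)| ≤ K * δ := by
        have halt := abs_log_sub_log_le' hMinv hs.1 hs'.1
        have heq : |(∑ i, (π (μ t) : Fin n → ℝ) i * r t i) -
            (∑ i, (π' (μ t) : Fin n → ℝ) i * r t i)| / (1 / M) =
            |(∑ i, (π (μ t) : Fin n → ℝ) i * r t i) -
            (∑ i, (π' (μ t) : Fin n → ℝ) i * r t i)| * M := by
          field_simp
        rw [heq] at halt
        calc |Real.log (∑ i, (π (μ t) : Fin n → ℝ) i * r t i) -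
            Real.log (∑ i, (π' (μ t) : Fin n → ℝ) i * r t i)|
            ≤ |(∑ i, (π (μ t) : Fin n → ℝ) i * r t i) -
              (∑ i, (π' (μ t) : Fin n → ℝ) i * r t i)| * M := halt
          _ ≤ ((n : ℝ) * (δ * M)) * M := mul_le_mul_of_nonneg_right hsd hM.le
          _ = K * δ := by rw [hK_def]; ring
      have hsplit : Real.log (pV μ π (t + 1)) - Real.log (pV μ π' (t + 1)) =
          (Real.log (pV μ π t) - Real.log (pV μ π' t)) +
          (Real.log (∑ i, (π (μ t) : Fin n → ℝ) i * r t i) -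
           Real.log (∑ i, (π' (μ t) : Fin n → ℝ) i * r t i)) := by
        rw [h1, h1']; ring
      rw [hsplit]
      refine (abs_add_le _ _).trans ?_
      push_cast
      linarith
  -- Lipschitz estimate on the time-averaged growth rates
  have hFdiff : ∀ (π π' : ↥(oS n) → ↥(cS n)) (δ : ℝ), 0 ≤ δ →
      (∀ x i, |(π x : Fin n → ℝ) i - (π' x : Fin n → ℝ) i| ≤ δ) →
      ∀ t : ℕ, |Real.log (pV μ π t) / t - Real.log (pV μ π' t) / t| ≤ K * δ := by
    intro π π' δ hδ hd t
    rcases Nat.eq_zero_or_pos t with h0 | hpos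
    · subst h0
      simp only [Nat.cast_zero, div_zero, sub_self, abs_zero]
      exact mul_nonneg hK0 hδ
    · have ht : (0 : ℝ) < t := by exact_mod_cast hpos
      rw [div_sub_div_same, abs_div, abs_of_pos ht, div_le_iff₀ ht]
      calc |Real.log (pV μ π t) - Real.log (pV μ π' t)| ≤ t * (K * δ) := hdiff π π' δ hδ hd t
        _ = K * δ * t := by ring
  -- consequence for the limiting growth rates
  have hWdiff : ∀ (θ θ' : ↥Θ) (δ : ℝ), 0 ≤ δ →
      (∀ x i, |((UniformFun.toFun θ.1 x : ↥(cS n)) : Fin n → ℝ) i -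
        ((UniformFun.toFun θ'.1 x : ↥(cS n)) : Fin n → ℝ) i| ≤ δ) →
      |W θ - W θ'| ≤ K * δ := by
    intro θ θ' δ hδ hd
    have hT : Tendsto (fun t : ℕ => |Real.log (pV μ (UniformFun.toFun θ.1) t) / t -
        Real.log (pV μ (UniformFun.toFun θ'.1) t) / t|) atTop (𝓝 |W θ - W θ'|) :=
      ((hW θ).sub (hW θ')).abs
    exact le_of_tendsto' hT fun t => hFdiff _ _ δ hδ hd t
  rw [Metric.tendsto_atTop]
  intro ε hε
  have hδ0 : (0 : ℝ) < ε / (6 * (K + 1)) := by positivity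
  set δ : ℝ := ε / (6 * (K + 1)) with hδdef
  have hKδ : K * δ ≤ ε / 6 := by
    rw [hδdef, mul_div_assoc', div_le_div_iff₀ (by positivity) (by norm_num : (0:ℝ) < 6)]
    nlinarith [hK0, hε.le]
  -- extract a finite δ-net inside Θ
  have hV : UniformFun.gen (↥(oS n)) (↥(cS n)) {p | dist p.1 p.2 < δ} ∈ uniformity (PMap n) :=
    (UniformFun.hasBasis_uniformity (↥(oS n)) (↥(cS n))).mem_of_mem
      (Metric.dist_mem_uniformity hδ0)
  obtain ⟨c, hcΘ, hcfin, hccov⟩ := totallyBounded_iff_subset.mp hTB _ hV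
  -- uniform-in-time convergence on the finite net
  have hev : ∀ᶠ t : ℕ in atTop, ∀ κ ∈ c, ∀ h : κ ∈ Θ,
      |Real.log (pV μ (UniformFun.toFun κ) t) / t - W ⟨κ, h⟩| < ε / 6 := by
    rw [hcfin.eventually_all]
    intro κ hκ
    have hκΘ : κ ∈ Θ := hcΘ hκ
    obtain ⟨N, hN⟩ := Metric.tendsto_atTop.mp (hW ⟨κ, hκΘ⟩) (ε / 6) (by positivity)
    filter_upwards [eventually_ge_atTop N] with t ht h
    have := hN t ht
    rw [Real.dist_eq] at this
    exact this
  obtain ⟨N, hN⟩ := eventually_atTop.mp hev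
  refine ⟨N, fun t ht => ?_⟩
  have hbound : ∀ θ : ↥Θ, |Real.log (pV μ (UniformFun.toFun θ.1) t) / t - W θ| ≤ ε / 2 := by
    intro θ
    have hθcov := hccov θ.2
    rw [Set.mem_iUnion₂] at hθcov
    obtain ⟨κ, hκc, hgen⟩ := hθcov
    have hκΘ : κ ∈ Θ := hcΘ hκc
    have hdist : ∀ (x : ↥(oS n)) i, |((UniformFun.toFun θ.1 x : ↥(cS n)) : Fin n → ℝ) i -
        ((UniformFun.toFun κ x : ↥(cS n)) : Fin n → ℝ) i| ≤ δ := by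
      intro x i
      have h1 : dist (UniformFun.toFun θ.1 x) (UniformFun.toFun κ x) < δ := hgen x
      have h2 : dist (((UniformFun.toFun θ.1 x : ↥(cS n)) : Fin n → ℝ) i)
          (((UniformFun.toFun κ x : ↥(cS n)) : Fin n → ℝ) i) ≤
          dist (UniformFun.toFun θ.1 x) (UniformFun.toFun κ x) := by
        rw [Subtype.dist_eq]
        exact dist_le_pi_dist _ _ i
      rw [Real.dist_eq] at h2
      linarith
    have e1 := hFdiff (UniformFun.toFun θ.1) (UniformFun.toFun κ) δ hδ0.le hdist t
    have e2 := hN t ht κ hκc hκΘ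
    have e3 := hWdiff ⟨κ, hκΘ⟩ θ δ hδ0.le fun x i => by
      rw [abs_sub_comm]; exact hdist x i
    have t1 := abs_sub_le (Real.log (pV μ (UniformFun.toFun θ.1) t) / t)
      (Real.log (pV μ (UniformFun.toFun κ) t) / t) (W θ)
    have t2 := abs_sub_le (Real.log (pV μ (UniformFun.toFun κ) t) / t)
      (W ⟨κ, hκΘ⟩) (W θ)
    linarith
  have hnn : 0 ≤ ⨆ θ : ↥Θ, |Real.log (pV μ (UniformFun.toFun θ.1) t) / t - W θ| :=
    Real.iSup_nonneg fun θ => abs_nonneg _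
  have hle : (⨆ θ : ↥Θ, |Real.log (pV μ (UniformFun.toFun θ.1) t) / t - W θ|) ≤ ε / 2 := by
    rcases isEmpty_or_nonempty (↥Θ) with hE | hNE
    · rw [Real.iSup_of_isEmpty]; positivity
    · exact ciSup_le hbound
  rw [Real.dist_eq, sub_zero, abs_of_nonneg hnn]
  linarith
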